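/- Let K1 and K2 be closed subsets of the complex plane ℂ, neither of which contains 0, and let α, β, γ, δ ∈ ℂ. If the polynomial α + β·z1 + γ·z2 + δ·z1·z2 is nonzero for all z1 ∉ K1 and all z2 ∉ K2, then α + δ·z is nonzero for every z not belonging to the set −K1·K2 := { −w1·w2 : w1 ∈ K1, w2 ∈ K2 }. -/

import Mathlib

/-- **Asano–Ruelle contraction.** If `K1`, `K2` are closed subsets of `ℂ` not containing `0`,
and `α + β z₁ + γ z₂ + δ z₁ z₂` does not vanish whenever `z₁ ∉ K1` and `z₂ ∉ K2`,
then `α + δ z` does not vanish whenever `z ∉ -K1·K2`. -/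
theorem asano_contraction (K1 K2 : Set ℂ) (hK1 : IsClosed K1) (hK2 : IsClosed K2)
    (h01 : (0 : ℂ) ∉ K1) (h02 : (0 : ℂ) ∉ K2) (α β γ δ : ℂ)
    (h : ∀ z1 ∉ K1, ∀ z2 ∉ K2, α + β * z1 + γ * z2 + δ * z1 * z2 ≠ 0) :
    ∀ z : ℂ, z ∉ {w : ℂ | ∃ w1 ∈ K1, ∃ w2 ∈ K2, w = -(w1 * w2)} → α + δ * z ≠ 0 := by
  intro z hzmem heq
  have hα : α ≠ 0 := by have := h 0 h01 0 h02; simpa using this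
  have hδ : δ ≠ 0 := by
    rintro rfl
    simp only [zero_mul, add_zero] at heq
    exact hα heq
  have hz' : ∀ w1 ∈ K1, ∀ w2 ∈ K2, w1 * w2 ≠ α / δ := by
    intro w1 h1 w2 h2 hw
    refine hzmem ⟨w1, h1, w2, h2, ?_⟩
    have hzv : z = -(α / δ) := by
      field_simp
      linear_combination heq
    rw [hzv, hw]
  have hβK : ∀ _ : β ≠ 0, -α / β ∈ K1 := by
    intro hβ
    by_contra hn
    exact h _ hn 0 h02 (by field_simp; ring)
  have hγK : ∀ _ : γ ≠ 0, -α / γ ∈ K2 := by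
    intro hγ
    by_contra hn
    exact h 0 h01 _ hn (by field_simp; ring)
  by_cases hD : α * δ - β * γ = 0
  · -- degenerate case: Φ factors
    have hβ : β ≠ 0 := by
      rintro rfl
      rw [zero_mul, sub_zero] at hD
      rcases mul_eq_zero.mp hD with h' | h'
      · exact hα h'
      · exact hδ h'
    have hγ : γ ≠ 0 := by
      rintro rfl
      rw [mul_zero, sub_zero] at hD
      rcases mul_eq_zero.mp hD with h' | h'
      · exact hα h'
      · exact hδ h'
    refine hz' _ (hβK hβ) _ (hγK hγ) ?_
    field_simp
    linear_combination hD
  · -- nondegenerate case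
    have F1 : ∀ t, t ∉ K1 → γ + δ * t ≠ 0 → -(α + β * t) / (γ + δ * t) ∈ K2 := by
      intro t ht hd
      by_contra hn
      refine h t ht _ hn ?_
      linear_combination div_mul_cancel₀ (-(α + β * t)) hd
    have F3 : ∀ w2 ∈ K2, β + δ * w2 ≠ 0 := by
      intro w2 hw2 heq2
      by_cases hβ : β = 0
      · rw [hβ, zero_add] at heq2
        rcases mul_eq_zero.mp heq2 with h' | h'
        · exact hδ h'
        · exact h02 (h' ▸ hw2)
      · refine hz' _ (hβK hβ) _ hw2 ?_
        field_simp
        linear_combination (-1 : ℂ) * heq2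
    have hK2ne : K2.Nonempty := by
      by_cases hγ : γ = 0
      · obtain ⟨ε, εpos, hball⟩ := Metric.isOpen_iff.mp hK1.isOpen_compl 0 h01
        have ht1 : ((ε / 2 : ℝ) : ℂ) ∉ K1 := by
          apply hball
          simp only [Metric.mem_ball, dist_zero_right, Complex.norm_real]
          rw [Real.norm_eq_abs, abs_of_pos (by linarith)]
          linarith
        have ht2 : γ + δ * ((ε / 2 : ℝ) : ℂ) ≠ 0 := by
          rw [hγ, zero_add]
          exact mul_ne_zero hδ (by exact_mod_cast (by positivity : (ε / 2 : ℝ) ≠ 0))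
        exact ⟨_, F1 _ ht1 ht2⟩
      · exact ⟨_, hγK hγ⟩
    have hopen : IsOpen K2 := by
      rw [isOpen_iff_mem_nhds]
      intro w2 hw2
      have hw20 : w2 ≠ 0 := fun h' => h02 (h' ▸ hw2)
      have hden : β + δ * w2 ≠ 0 := F3 w2 hw2
      set g : ℂ → ℂ := fun w => -(α + γ * w) / (β + δ * w) with hg
      have huk : g w2 ∉ K1 := by
        by_cases hαγ : α + γ * w2 = 0
        · have : g w2 = 0 := by rw [hg]; simp [hαγ]
          rw [this]; exact h01
        · intro huK1
          have hvk : α / (δ * w2) ∉ K1 := by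
            intro hvK1
            refine hz' _ hvK1 w2 hw2 ?_
            field_simp
          have hgv : γ + δ * (α / (δ * w2)) ≠ 0 := by
            have e : δ * (α / (δ * w2)) = α / w2 := by field_simp
            rw [e]
            intro h'
            apply hαγ
            field_simp at h'
            linear_combination h'
          have hfv := F1 _ hvk hgv
          have efv : -(α + β * (α / (δ * w2))) / (γ + δ * (α / (δ * w2)))
              = -α * (β + δ * w2) / (δ * (α + γ * w2)) := by
            rw [div_eq_div_iff hgv (mul_ne_zero hδ hαγ)]
            field_simp
            ring
          rw [efv] at hfv
          refine hz' _ huK1 _ hfv ?_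
          rw [hg]
          field_simp [mul_comm w2 δ ▸ hden]
      have hgu : γ + δ * g w2 ≠ 0 := by
        rw [hg]
        intro h'
        apply hD
        field_simp at h'
        linear_combination -h'
      have hO1 : IsOpen {w : ℂ | β + δ * w ≠ 0} := by
        have : {w : ℂ | β + δ * w ≠ 0} = (fun w : ℂ => β + δ * w) ⁻¹' {0}ᶜ := rfl
        rw [this]
        exact isOpen_compl_singleton.preimage (by fun_prop)
      have hT : IsOpen (K1ᶜ ∩ {x : ℂ | γ + δ * x ≠ 0}) := by
        refine hK1.isOpen_compl.inter ?_
        have : {x : ℂ | γ + δ * x ≠ 0} = (fun x : ℂ => γ + δ * x) ⁻¹' {0}ᶜ := rfl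
        rw [this]
        exact isOpen_compl_singleton.preimage (by fun_prop)
      have hgc : ContinuousOn g {w : ℂ | β + δ * w ≠ 0} := by
        apply ContinuousOn.div
        · fun_prop
        · fun_prop
        · exact fun x hx => hx
      have hOV : IsOpen ({w : ℂ | β + δ * w ≠ 0} ∩ g ⁻¹' (K1ᶜ ∩ {x : ℂ | γ + δ * x ≠ 0})) :=
        hgc.isOpen_inter_preimage hO1 hT
      refine Filter.mem_of_superset (hOV.mem_nhds ⟨hden, huk, hgu⟩) ?_
      rintro w ⟨hpw, hgw1, hgw2⟩
      have hpw' : β + δ * w ≠ 0 := hpw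
      have hmem := F1 (g w) hgw1 hgw2
      have hfg : -(α + β * g w) / (γ + δ * g w) = w := by
        have key : -(α + β * g w) = w * (γ + δ * g w) := by
          rw [hg]
          field_simp [mul_comm w δ ▸ hpw']
          ring
        rw [key, mul_div_assoc, div_self hgw2, mul_one]
      rwa [hfg] at hmem
    rcases isClopen_iff.mp ⟨hK2, hopen⟩ with h' | h'
    · exact hK2ne.ne_empty h'
    · exact h02 (h' ▸ Set.mem_univ 0)
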